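/- Let G be a finite maximal triangle-free graph that does not contain the Petersen graph minus a vertex, H_10 - v, as a (not necessarily induced) subgraph. Then G contains no induced 6-cycle. -/

import Mathlib

/-- The 6-cycle `C₆`. -/
def C6 : SimpleGraph (ZMod 6) :=
  SimpleGraph.fromRel (fun i j => j = i + 1)

/-- The Petersen graph minus a vertex, `H₁₀ - v`: outer 5-cycle 0,1,2,3,4, inner
vertices 5,6,7,8 (the inner vertex adjacent to 4 is removed), with the remaining
pentagram edges and spokes. -/
def H10minusV : SimpleGraph (Fin 9) :=
  SimpleGraph.fromRel (fun i j =>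
    (i, j) ∈ ([(0,1), (1,2), (2,3), (3,4), (4,0),
               (5,7), (6,8), (8,5),
               (0,5), (1,6), (2,7), (3,8)] : List (Fin 9 × Fin 9)))


instance : DecidableRel C6.Adj := fun i j =>
  decidable_of_iff' _ (SimpleGraph.fromRel_adj _ i j)

instance : DecidableRel H10minusV.Adj := fun i j =>
  decidable_of_iff' _ (SimpleGraph.fromRel_adj _ i j)

/-- Build an `H10minusV` subgraph from an induced `C6` together with two antipodal
hubs `u, v` and a common neighbour `z` of the hubs. -/
lemma buildEmbed {V : Type*} (G : SimpleGraph V)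
    (htri : ∀ a b c : V, G.Adj a b → G.Adj a c → ¬ G.Adj b c)
    (c : ZMod 6 → V) (hinj : Function.Injective c)
    (hadj : ∀ i j : ZMod 6, G.Adj (c i) (c j) ↔ C6.Adj i j)
    (u v z : V)
    (hu0 : G.Adj (c 0) u) (hu3 : G.Adj (c 3) u)
    (hv1 : G.Adj (c 1) v) (hv4 : G.Adj (c 4) v)
    (hzu : G.Adj u z) (hzv : G.Adj v z) :
    ∃ f : Fin 9 ↪ V, ∀ a b : Fin 9, H10minusV.Adj a b → G.Adj (f a) (f b) := by
  have hunotc : ∀ k, u ≠ c k := by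
    intro k hk
    have h0 : C6.Adj 0 k := (hadj 0 k).1 (hk ▸ hu0)
    have h3 : C6.Adj 3 k := (hadj 3 k).1 (hk ▸ hu3)
    exact (by decide : ∀ k : ZMod 6, C6.Adj 0 k → C6.Adj 3 k → False) k h0 h3
  have hvnotc : ∀ k, v ≠ c k := by
    intro k hk
    have h1 : C6.Adj 1 k := (hadj 1 k).1 (hk ▸ hv1)
    have h4 : C6.Adj 4 k := (hadj 4 k).1 (hk ▸ hv4)
    exact (by decide : ∀ k : ZMod 6, C6.Adj 1 k → C6.Adj 4 k → False) k h1 h4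
  have hznotc : ∀ k, z ≠ c k := by
    intro k hk
    have h0 : ¬ C6.Adj 0 k := fun h => htri (c 0) u (c k) hu0 ((hadj 0 k).2 h).symm.symm (hk ▸ hzu)
    have h3 : ¬ C6.Adj 3 k := fun h => htri (c 3) u (c k) hu3 ((hadj 3 k).2 h) (hk ▸ hzu)
    have h1 : ¬ C6.Adj 1 k := fun h => htri (c 1) v (c k) hv1 ((hadj 1 k).2 h) (hk ▸ hzv)
    have h4 : ¬ C6.Adj 4 k := fun h => htri (c 4) v (c k) hv4 ((hadj 4 k).2 h) (hk ▸ hzv)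
    exact (by decide : ∀ k : ZMod 6, ¬ C6.Adj 0 k → ¬ C6.Adj 3 k → ¬ C6.Adj 1 k →
      ¬ C6.Adj 4 k → False) k h0 h3 h1 h4
  have huv : u ≠ v := by
    intro h
    exact htri u (c 0) (c 1) hu0.symm (h ▸ hv1.symm) ((hadj 0 1).2 (by decide))
  have hzu' : z ≠ u := (G.ne_of_adj hzu).symm
  have hzv' : z ≠ v := (G.ne_of_adj hzv).symm
  -- cycle edges
  have A01 : G.Adj (c 0) (c 1) := (hadj 0 1).2 (by decide)
  have A12 : G.Adj (c 1) (c 2) := (hadj 1 2).2 (by decide)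
  have A23 : G.Adj (c 2) (c 3) := (hadj 2 3).2 (by decide)
  have A34 : G.Adj (c 3) (c 4) := (hadj 3 4).2 (by decide)
  have A45 : G.Adj (c 4) (c 5) := (hadj 4 5).2 (by decide)
  have A50 : G.Adj (c 5) (c 0) := (hadj 5 0).2 (by decide)
  refine ⟨⟨![c 0, c 1, v, c 4, c 5, u, c 2, z, c 3], ?_⟩, ?_⟩
  · intro a b hab
    fin_cases a <;> fin_cases b <;>
      first
        | rfl
        | exact absurd (hinj hab) (by decide)
        | exact absurd hab (hunotc _)
        | exact absurd hab (hvnotc _)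
        | exact absurd hab (hznotc _)
        | exact absurd hab.symm (hunotc _)
        | exact absurd hab.symm (hvnotc _)
        | exact absurd hab.symm (hznotc _)
        | exact absurd hab huv
        | exact absurd hab.symm huv
        | exact absurd hab hzu'
        | exact absurd hab.symm hzu'
        | exact absurd hab hzv'
        | exact absurd hab.symm hzv'
  · intro a b hab
    fin_cases a <;> fin_cases b <;>
      first
        | exact absurd hab (by decide)
        | exact A01 | exact A01.symm
        | exact A12 | exact A12.symm
        | exact A23 | exact A23.symm
        | exact A34 | exact A34.symm
        | exact A45 | exact A45.symm
        | exact A50 | exact A50.symm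
        | exact hu0 | exact hu0.symm
        | exact hu3 | exact hu3.symm
        | exact hv1 | exact hv1.symm
        | exact hv4 | exact hv4.symm
        | exact hzu | exact hzu.symm
        | exact hzv | exact hzv.symm

/-- A finite maximal triangle-free graph containing no `H₁₀ - v` as a (not necessarily
induced) subgraph contains no induced 6-cycle. -/
theorem maximalTF_H10v_free_no_C6 {V : Type*} [Fintype V] (G : SimpleGraph V)
    (hK3 : G.CliqueFree 3)
    (hmaxtf : ∀ x y : V, x ≠ y → ¬ G.Adj x y → ∃ z, G.Adj x z ∧ G.Adj y z)
    (hH10 : ¬ ∃ f : Fin 9 ↪ V, ∀ a b : Fin 9, H10minusV.Adj a b → G.Adj (f a) (f b)) :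
    ¬ Nonempty (C6 ↪g G) := by
  rintro ⟨e⟩
  have htri : ∀ a b c : V, G.Adj a b → G.Adj a c → ¬ G.Adj b c := by
    classical
    intro a b c hab hac hbc
    exact hK3 {a, b, c} (SimpleGraph.is3Clique_triple_iff.mpr ⟨hab, hac, hbc⟩)
  have hinj : Function.Injective e := e.injective
  have hadj : ∀ i j : ZMod 6, G.Adj (e i) (e j) ↔ C6.Adj i j := fun i j => e.map_adj_iff
  -- the three hubs
  have hub : ∀ i : ZMod 6, ∃ w, G.Adj (e i) w ∧ G.Adj (e (i + 3)) w := by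
    intro i
    refine hmaxtf (e i) (e (i + 3)) (fun h => ?_) (fun h => ?_)
    · exact (by decide : ∀ i : ZMod 6, i ≠ i + 3) i (hinj h)
    · exact (by decide : ∀ i : ZMod 6, ¬ C6.Adj i (i + 3)) i ((hadj i (i + 3)).1 h)
  obtain ⟨w0, hw00, hw03⟩ := hub 0
  obtain ⟨w1, hw11, hw14⟩ := hub 1
  obtain ⟨w2, hw22, hw25⟩ := hub 2
  have hw03' : G.Adj (e 3) w0 := by simpa using hw03
  have hw14' : G.Adj (e 4) w1 := by
    rw [(by decide : (1 : ZMod 6) + 3 = 4)] at hw14; exact hw14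
  have hw25' : G.Adj (e 5) w2 := by
    rw [(by decide : (2 : ZMod 6) + 3 = 5)] at hw25; exact hw25
  have hrot : ∀ i j : ZMod 6, C6.Adj (i + 1) (j + 1) ↔ C6.Adj i j := by decide
  have hneg : ∀ i j : ZMod 6, C6.Adj (-i) (-j) ↔ C6.Adj i j := by decide
  by_cases h01 : G.Adj w0 w1
  · by_cases h12 : G.Adj w1 w2
    · -- w0, w2 non-adjacent; use reflected cycle c i = e (-i)
      have h02 : ¬ G.Adj w0 w2 := fun h => htri w1 w0 w2 h01.symm h12 h
      have hne02 : w0 ≠ w2 := by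
        intro h
        subst h
        exact htri w0 (e 2) (e 3) hw22.symm hw03'.symm ((hadj 2 3).2 (by decide))
      obtain ⟨t, ht0, ht2⟩ := hmaxtf w0 w2 hne02 h02
      refine hH10 (buildEmbed G htri (fun i => e (-i))
        (hinj.comp neg_injective)
        (fun i j => (hadj (-i) (-j)).trans (hneg i j)) w0 w2 t ?_ ?_ ?_ ?_ ht0 ht2)
      · simpa using hw00
      · show G.Adj (e (-3 : ZMod 6)) w0
        have : (-3 : ZMod 6) = 3 := by decide
        rw [this]; exact hw03'
      · show G.Adj (e (-1 : ZMod 6)) w2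
        have : (-1 : ZMod 6) = 5 := by decide
        rw [this]; exact hw25'
      · show G.Adj (e (-4 : ZMod 6)) w2
        have : (-4 : ZMod 6) = 2 := by decide
        rw [this]; exact hw22
    · -- w1, w2 non-adjacent; use rotated cycle c i = e (i + 1)
      have hne12 : w1 ≠ w2 := by
        intro h
        subst h
        exact htri w1 (e 4) (e 5) hw14'.symm hw25'.symm ((hadj 4 5).2 (by decide))
      obtain ⟨t, ht1, ht2⟩ := hmaxtf w1 w2 hne12 h12
      refine hH10 (buildEmbed G htri (fun i => e (i + 1))
        (hinj.comp (add_left_injective 1))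
        (fun i j => (hadj (i + 1) (j + 1)).trans (hrot i j)) w1 w2 t ?_ ?_ ?_ ?_ ht1 ht2)
      · show G.Adj (e ((0 : ZMod 6) + 1)) w1
        have : ((0 : ZMod 6) + 1) = 1 := by decide
        rw [this]; exact hw11
      · show G.Adj (e ((3 : ZMod 6) + 1)) w1
        have : ((3 : ZMod 6) + 1) = 4 := by decide
        rw [this]; exact hw14'
      · show G.Adj (e ((1 : ZMod 6) + 1)) w2
        have : ((1 : ZMod 6) + 1) = 2 := by decide
        rw [this]; exact hw22
      · show G.Adj (e ((4 : ZMod 6) + 1)) w2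
        have : ((4 : ZMod 6) + 1) = 5 := by decide
        rw [this]; exact hw25'
  · -- w0, w1 non-adjacent; use the cycle as is
    have hne01 : w0 ≠ w1 := by
      intro h
      subst h
      exact htri w0 (e 0) (e 1) hw00.symm hw11.symm ((hadj 0 1).2 (by decide))
    obtain ⟨t, ht0, ht1⟩ := hmaxtf w0 w1 hne01 h01
    exact hH10 (buildEmbed G htri e hinj hadj w0 w1 t hw00 hw03' hw11 hw14' ht0 ht1)
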